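/- Let E be a module over a commutative ring, let r be a scalar, and let D, U be linear endomorphisms of E satisfying D∘U = U∘D + r·id. Then for every positive integer ℓ, D^ℓ∘U^ℓ = (U∘D + r·id)∘(U∘D + 2r·id)∘⋯∘(U∘D + ℓr·id). -/
import Mathlib

private lemma stmt8_aux {R E : Type*} [CommRing R] [AddCommGroup E] [Module R E]
    (D U : Module.End R E) (r : R)
    (h : D * U = U * D + r • (1 : Module.End R E)) (n : ℕ) :
    D * U ^ (n + 1) = U ^ (n + 1) * D + (((n + 1 : ℕ) : R) * r) • U ^ n := by
  induction n with
  | zero => simpa using h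
  | succ m ih =>
    rw [pow_succ U (m + 1), ← mul_assoc, ih, add_mul, mul_assoc, h, mul_add,
      ← mul_assoc, ← pow_succ, smul_mul_assoc, ← pow_succ, mul_smul_comm, mul_one]
    push_cast
    module

/-- Stanley's commutation identity: if `DU = UD + r·id` then
`DˡUˡ = (UD + r·id)(UD + 2r·id)⋯(UD + lr·id)`. -/
theorem stmt8 {R E : Type*} [CommRing R] [AddCommGroup E] [Module R E]
    (D U : Module.End R E) (r : R)
    (h : D * U = U * D + r • (1 : Module.End R E)) (l : ℕ) (hl : 0 < l) :
    D ^ l * U ^ l =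
      ((List.range l).map
        (fun k => U * D + (((k + 1 : ℕ) : R) * r) • (1 : Module.End R E))).prod := by
  obtain ⟨m, rfl⟩ := Nat.exists_eq_add_of_lt hl
  clear hl
  rw [zero_add]
  induction m with
  | zero => simpa [List.range_succ] using h
  | succ k ih =>
    have e1 : D ^ (k + 1 + 1) * U ^ (k + 1 + 1) = D ^ (k + 1) * (D * U ^ (k + 1 + 1)) := by
      rw [pow_succ D (k + 1), mul_assoc]
    rw [e1, stmt8_aux D U r h (k + 1)]
    have e2 : D ^ (k + 1) * (U ^ (k + 2) * D + (((k + 1 + 1 : ℕ) : R) * r) • U ^ (k + 1))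
        = (D ^ (k + 1) * U ^ (k + 1)) * (U * D + (((k + 1 + 1 : ℕ) : R) * r) • 1) := by
      rw [mul_add, mul_smul_comm, mul_add, mul_smul_comm, mul_one,
        pow_succ U (k + 1)]
      noncomm_ring
    rw [e2, ih]
    simp [List.range_succ, mul_assoc]
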